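/- There exists a constant C > 0 such that for every even integer n ≥ 2 and every subset A ⊆ {1,…,n} with |A| = n/2, the sum over i = 1,…,n of C(i−1, |A ∩ {1,…,i−1}|) · C(n−i, |A ∩ {i+1,…,n}|) is at most C · √n · C(n, n/2). (Equivalently: for a uniformly random (n/2)-element subset R of {1,…,n}, the expected number of indices i with |R ∩ {1,…,i−1}| = |A ∩ {1,…,i−1}| and |R ∩ {i+1,…,n}| = |A ∩ {i+1,…,n}| is O(√n); this is the quantitative core of the theorem that the number of satisfied matched pairs cannot be approximated within ratio better than O(1/√n).) -/

import Mathlib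

lemma cb_sq_le (k : ℕ) : (2*k+1) * (Nat.centralBinom k)^2 ≤ 2 * 16^k := by
  induction k with
  | zero => simp [Nat.centralBinom]
  | succ k ih =>
    have h := Nat.succ_mul_centralBinom_succ k
    have key : (k+1)^2 * ((2*(k+1)+1) * (Nat.centralBinom (k+1))^2)
        ≤ (k+1)^2 * (2 * 16^(k+1)) := by
      have e : (k+1)^2 * ((2*(k+1)+1) * (Nat.centralBinom (k+1))^2)
          = (2*k+3) * (2*(2*k+1)*Nat.centralBinom k)^2 := by
        rw [← h]; ring
      rw [e]
      calc (2*k+3) * (2*(2*k+1)*Nat.centralBinom k)^2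
          = 4*(2*k+3)*(2*k+1) * ((2*k+1) * (Nat.centralBinom k)^2) := by ring
        _ ≤ 4*(2*k+3)*(2*k+1) * (2*16^k) := Nat.mul_le_mul_left _ ih
        _ = ((2*k+3)*(2*k+1)*8) * 16^k := by ring
        _ ≤ (32*(k+1)^2) * 16^k := mul_le_mul_left (by nlinarith) _
        _ = (k+1)^2 * (2*16^(k+1)) := by ring
    exact Nat.le_of_mul_le_mul_left key (by positivity)

lemma middle_sq_le (i a : ℕ) : (i+1) * (Nat.choose i a)^2 ≤ 2 * 4^i := by
  have h1 : Nat.choose i a ≤ Nat.choose i (i/2) := Nat.choose_le_middle a i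
  have h2 : (i+1) * (Nat.choose i a)^2 ≤ (i+1) * (Nat.choose i (i/2))^2 :=
    Nat.mul_le_mul_left _ (Nat.pow_le_pow_left h1 2)
  refine h2.trans ?_
  rcases Nat.even_or_odd i with ⟨k, hk⟩ | ⟨k, hk⟩
  · subst hk
    have hd : (k+k)/2 = k := by omega
    have hc : Nat.choose (k+k) ((k+k)/2) = Nat.centralBinom k := by
      rw [hd, Nat.centralBinom]; ring_nf
    have e : (4:ℕ)^(k+k) = 16^k := by
      rw [show k+k = 2*k by ring, pow_mul]; norm_num
    rw [hc, e, show k+k+1 = 2*k+1 by ring]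
    exact cb_sq_le k
  · subst hk
    have hdiv : (2*k+1)/2 = k := by omega
    rw [hdiv]
    have hsymm : Nat.choose (2*k+1) (k+1) = Nat.choose (2*k+1) k := by
      have := (Nat.choose_symm (n := 2*k+1) (k := k+1) (by omega)).symm
      simpa [show 2*k+1-(k+1) = k by omega] using this
    have hcb : Nat.centralBinom (k+1) = 2 * Nat.choose (2*k+1) k := by
      rw [Nat.centralBinom, show 2*(k+1) = (2*k+1)+1 by ring, Nat.choose_succ_succ,
        hsymm]
      omega
    have h3 := cb_sq_le (k+1)
    rw [hcb] at h3
    have e : (4:ℕ)^(2*k+1) = 4 * 16^k := by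
      rw [pow_succ, pow_mul]; norm_num; ring
    set c := Nat.choose (2*k+1) k with hc
    have key : 4*((2*k+1+1) * c^2) ≤ 4*(2*4^(2*k+1)) := by
      calc 4*((2*k+1+1)*c^2) = (8*k+8)*c^2 := by ring
        _ ≤ (8*k+12)*c^2 := mul_le_mul_left (by omega) _
        _ = (2*(k+1)+1)*(2*c)^2 := by ring
        _ ≤ 2*16^(k+1) := h3
        _ = 4*(2*4^(2*k+1)) := by rw [e]; ring
    exact Nat.le_of_mul_le_mul_left key (by norm_num)

lemma cb_lower (k : ℕ) (hk : 1 ≤ k) : 16^k ≤ 4*k*(Nat.centralBinom k)^2 := by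
  induction k with
  | zero => omega
  | succ k ih =>
    rcases Nat.eq_or_lt_of_le hk with h1 | h1
    · simp [← h1]; decide
    · have ihk := ih (by omega)
      have h := Nat.succ_mul_centralBinom_succ k
      have key : (k+1)^2 * 16^(k+1) ≤ (k+1)^2 * (4*(k+1)*(Nat.centralBinom (k+1))^2) := by
        have e : (k+1)^2 * (4*(k+1)*(Nat.centralBinom (k+1))^2)
            = 4*(k+1) * ((k+1) * Nat.centralBinom (k+1))^2 := by ring
        rw [e, h]
        calc (k+1)^2 * 16^(k+1) = (16*(k+1)^2) * 16^k := by ring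
          _ ≤ (16*(k+1)^2) * (4*k*(Nat.centralBinom k)^2) := Nat.mul_le_mul_left _ ihk
          _ = (64*k*(k+1)^2) * (Nat.centralBinom k)^2 := by ring
          _ ≤ (16*(k+1)*(2*k+1)^2) * (Nat.centralBinom k)^2 := mul_le_mul_left (by nlinarith) _
          _ = 4*(k+1) * (2*(2*k+1)*Nat.centralBinom k)^2 := by ring
      exact Nat.le_of_mul_le_mul_left key (by positivity)



lemma choose_le_real (i a : ℕ) :
    (Nat.choose i a : ℝ) ≤ Real.sqrt 2 * 2^i / Real.sqrt (i+1) := by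
  have hpos : (0:ℝ) < Real.sqrt (i+1) := Real.sqrt_pos.2 (by positivity)
  rw [le_div_iff₀ hpos]
  have h1 : (Nat.choose i a : ℝ) * Real.sqrt (i+1)
      = Real.sqrt ((Nat.choose i a)^2 * (i+1)) := by
    rw [Real.sqrt_mul (by positivity), Real.sqrt_sq (by positivity)]
  have h2 : Real.sqrt 2 * 2^i = Real.sqrt (2 * 4^i) := by
    rw [Real.sqrt_mul (by norm_num)]
    congr 1
    rw [show (4:ℝ)^i = ((2:ℝ)^i)^2 by rw [← pow_mul, mul_comm, pow_mul]; norm_num,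
      Real.sqrt_sq (by positivity)]
  rw [h1, h2]
  apply Real.sqrt_le_sqrt
  have := middle_sq_le i a
  have : ((i+1) * (Nat.choose i a)^2 : ℝ) ≤ 2 * 4^i := by exact_mod_cast this
  linarith

lemma sum_rsqrt_le (n : ℕ) :
    ∑ j ∈ Finset.range n, 1 / Real.sqrt (j+1) ≤ 2 * Real.sqrt n := by
  induction n with
  | zero => simp
  | succ n ih =>
    rw [Finset.sum_range_succ]
    have ha : (0:ℝ) ≤ Real.sqrt n := Real.sqrt_nonneg _
    have hb : (0:ℝ) < Real.sqrt (n+1) := Real.sqrt_pos.2 (by positivity)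
    have hab : Real.sqrt n ≤ Real.sqrt (n+1) := Real.sqrt_le_sqrt (by push_cast; linarith)
    have hsa : Real.sqrt n ^ 2 = n := Real.sq_sqrt (by positivity)
    have hsb : Real.sqrt (n+1) ^ 2 = (n:ℝ)+1 := by
      have := Real.sq_sqrt (show (0:ℝ) ≤ (n:ℝ)+1 by positivity); rw [this]
    have key : 1 / Real.sqrt (n+1) ≤ 2 * (Real.sqrt (n+1) - Real.sqrt n) := by
      rw [div_le_iff₀ hb]
      nlinarith [sq_nonneg (Real.sqrt (n+1) - Real.sqrt n)]
    have : ((n:ℝ)+1) = ((n+1 : ℕ) : ℝ) := by push_cast; ring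
    calc ∑ j ∈ Finset.range n, 1 / Real.sqrt (j+1) + 1 / Real.sqrt (n+1)
        ≤ 2 * Real.sqrt n + 2 * (Real.sqrt (n+1) - Real.sqrt n) := by
          have := ih; push_cast at *; linarith
      _ = 2 * Real.sqrt ((n:ℝ)+1) := by ring
      _ = 2 * Real.sqrt ((n+1:ℕ)) := by rw [this]

lemma split_aux (x y m : ℝ) (hx : 0 < x) (hy : 0 < y) (hm : 0 < m)
    (h : m ≤ Real.sqrt 2 * x ∨ m ≤ Real.sqrt 2 * y) :
    1/(x*y) ≤ Real.sqrt 2/m * (1/x + 1/y) := by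
  have h2 : (0:ℝ) < Real.sqrt 2 := by positivity
  rcases h with h | h
  · have h1 : 1/(x*y) ≤ Real.sqrt 2/m * (1/y) := by
      rw [div_mul_div_comm, div_le_div_iff₀ (by positivity) (by positivity)]
      nlinarith
    have h3 : (0:ℝ) ≤ Real.sqrt 2/m * (1/x) := by positivity
    nlinarith
  · have h1 : 1/(x*y) ≤ Real.sqrt 2/m * (1/x) := by
      rw [div_mul_div_comm, div_le_div_iff₀ (by positivity) (by positivity)]
      nlinarith
    have h3 : (0:ℝ) ≤ Real.sqrt 2/m * (1/y) := by positivity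
    nlinarith



lemma term_bound (n i a b : ℕ) (hi : i < n) :
    ((Nat.choose i a * Nat.choose (n-1-i) b : ℕ) : ℝ)
      ≤ 2^n * (Real.sqrt 2 / Real.sqrt n)
          * (1/Real.sqrt (i+1) + 1/Real.sqrt ((n-i : ℕ))) := by
  have hn : 1 ≤ n := by omega
  set p : ℝ := Real.sqrt (i+1) with hp
  set q : ℝ := Real.sqrt ((n-i : ℕ)) with hq
  have hppos : 0 < p := Real.sqrt_pos.2 (by positivity)
  have hqpos : 0 < q := Real.sqrt_pos.2 (by exact_mod_cast Nat.sub_pos_of_lt hi)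
  have hnpos : (0:ℝ) < Real.sqrt n := Real.sqrt_pos.2 (by exact_mod_cast hn)
  have c1 := choose_le_real i a
  have c2 := choose_le_real (n-1-i) b
  have e1 : ((n-1-i : ℕ):ℝ) + 1 = ((n-i : ℕ):ℝ) := by
    exact_mod_cast (by omega : (n-1-i)+1 = n-i)
  rw [e1] at c2
  have prod : ((Nat.choose i a * Nat.choose (n-1-i) b : ℕ) : ℝ)
      ≤ 2^n * (1/(p*q)) := by
    push_cast
    calc (Nat.choose i a : ℝ) * (Nat.choose (n-1-i) b : ℝ)
        ≤ (Real.sqrt 2 * 2^i / p) * (Real.sqrt 2 * 2^(n-1-i) / q) := by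
          apply mul_le_mul c1 c2 (by positivity) (by positivity)
      _ = (Real.sqrt 2 * Real.sqrt 2) * (2^i * 2^(n-1-i)) * (1/(p*q)) := by
          field_simp
      _ = 2^n * (1/(p*q)) := by
          rw [Real.mul_self_sqrt (by norm_num), ← pow_add,
            show i + (n-1-i) = n-1 by omega]
          congr 1
          rw [show (2:ℝ) * 2^(n-1) = 2^(n-1+1) by rw [pow_succ]; ring,
            show n-1+1 = n by omega]
  refine prod.trans ?_
  have hsplit : 1/(p*q) ≤ Real.sqrt 2/Real.sqrt n * (1/p + 1/q) := by
    apply split_aux _ _ _ hppos hqpos hnpos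
    rcases le_or_gt (2*(i+1)) n with h | h
    · right
      have h2 : (n:ℝ) ≤ 2 * ((n-i:ℕ):ℝ) := by
        exact_mod_cast (by omega : n ≤ 2*(n-i))
      calc Real.sqrt n ≤ Real.sqrt (2 * ((n-i:ℕ):ℝ)) := Real.sqrt_le_sqrt h2
        _ = Real.sqrt 2 * q := Real.sqrt_mul (by norm_num) _
    · left
      have h2 : (n:ℝ) ≤ 2 * ((i:ℝ)+1) := by
        have : (n:ℝ) ≤ ((2*(i+1) : ℕ) : ℝ) := by exact_mod_cast h.le
        push_cast at this; linarith
      calc Real.sqrt n ≤ Real.sqrt (2 * ((i:ℝ)+1)) := Real.sqrt_le_sqrt h2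
        _ = Real.sqrt 2 * p := Real.sqrt_mul (by norm_num) _
  calc 2^n * (1/(p*q)) ≤ 2^n * (Real.sqrt 2/Real.sqrt n * (1/p + 1/q)) := by
        apply mul_le_mul_of_nonneg_left hsplit (by positivity)
    _ = 2^n * (Real.sqrt 2 / Real.sqrt n) * (1/p + 1/q) := by ring



/-- There is a constant `C > 0` such that for every even `n ≥ 2` and every
`A ⊆ Fin n` with `|A| = n/2`,
`∑ i, C(|{x < i}|, |A ∩ {x < i}|) · C(|{x > i}|, |A ∩ {x > i}|) ≤ C √n · C(n, n/2)`. -/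
theorem expected_satisfied_pairs_le_sqrt :
    ∃ C : ℝ, 0 < C ∧ ∀ n : ℕ, Even n → 2 ≤ n → ∀ A : Finset (Fin n), A.card = n / 2 →
      (∑ i : Fin n,
        ((Nat.choose (i : ℕ) ((A.filter (fun x => x < i)).card) *
          Nat.choose (n - 1 - (i : ℕ)) ((A.filter (fun x => i < x)).card) : ℕ) : ℝ))
        ≤ C * Real.sqrt n * ((Nat.choose n (n / 2) : ℕ) : ℝ) := by
  refine ⟨8, by norm_num, ?_⟩
  intro n hev hn2 A hA
  obtain ⟨k, hk⟩ := hev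
  have hk1 : 1 ≤ k := by omega
  have hnpos : (0:ℝ) < Real.sqrt n := Real.sqrt_pos.2 (by positivity)
  set g : ℕ → ℝ := fun j => 2^n * (Real.sqrt 2 / Real.sqrt n)
      * (1/Real.sqrt (j+1) + 1/Real.sqrt ((n-j : ℕ))) with hg
  have step1 : (∑ i : Fin n,
        ((Nat.choose (i : ℕ) ((A.filter (fun x => x < i)).card) *
          Nat.choose (n - 1 - (i : ℕ)) ((A.filter (fun x => i < x)).card) : ℕ) : ℝ))
      ≤ ∑ i : Fin n, g (i : ℕ) :=
    Finset.sum_le_sum fun i _ => term_bound n i _ _ i.isLt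
  have step2 : ∑ i : Fin n, g (i : ℕ) = ∑ j ∈ Finset.range n, g j :=
    Fin.sum_univ_eq_sum_range g n
  have step4 : ∑ j ∈ Finset.range n, 1/Real.sqrt ((n-j : ℕ))
      = ∑ j ∈ Finset.range n, 1/Real.sqrt (j+1) := by
    rw [← Finset.sum_range_reflect (fun j => 1/Real.sqrt ((j:ℝ)+1)) n]
    refine Finset.sum_congr rfl fun j hj => ?_
    rw [Finset.mem_range] at hj
    have e : ((n-1-j:ℕ):ℝ)+1 = ((n-j:ℕ):ℝ) := by
      exact_mod_cast (by omega : (n-1-j)+1 = n-j)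
    rw [e]
  have step5 : ∑ j ∈ Finset.range n, g j ≤ 2^n * (Real.sqrt 2 / Real.sqrt n) * (4 * Real.sqrt n) := by
    rw [hg, ← Finset.mul_sum, Finset.sum_add_distrib, step4]
    have hs := sum_rsqrt_le n
    have hfac : (0:ℝ) ≤ 2^n * (Real.sqrt 2 / Real.sqrt n) := by positivity
    apply mul_le_mul_of_nonneg_left _ hfac
    linarith
  have step6 : 2^n * (Real.sqrt 2 / Real.sqrt n) * (4 * Real.sqrt n)
      = 4 * Real.sqrt 2 * 2^n := by
    field_simp
  -- lower bound on the RHS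
  have hchoose : Nat.choose n (n/2) = Nat.centralBinom k := by
    rw [Nat.centralBinom]
    congr 1 <;> omega
  have hcb : (2:ℝ)^n ≤ Real.sqrt 2 * Real.sqrt n * (Nat.centralBinom k : ℝ) := by
    have h1 : (2:ℝ)^n = Real.sqrt ((16:ℝ)^k) := by
      have e16 : ((16:ℝ)^k) = ((4:ℝ)^k)^2 := by
        rw [← pow_mul, show k*2 = 2*k by ring, pow_mul]; norm_num
      rw [e16, Real.sqrt_sq (by positivity), show n = 2*k by omega, pow_mul]
      norm_num
    have h2 : Real.sqrt 2 * Real.sqrt n * (Nat.centralBinom k : ℝ)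
        = Real.sqrt (2 * n * (Nat.centralBinom k : ℝ)^2) := by
      rw [show 2 * (n:ℝ) * (Nat.centralBinom k : ℝ)^2
            = (2 * n) * (Nat.centralBinom k : ℝ)^2 by ring,
        Real.sqrt_mul (by positivity), Real.sqrt_mul (by norm_num),
        Real.sqrt_sq (by positivity)]
    rw [h1, h2]
    apply Real.sqrt_le_sqrt
    have := cb_lower k hk1
    have h3 : ((16:ℕ)^k : ℝ) ≤ ((4*k*(Nat.centralBinom k)^2 : ℕ) : ℝ) := by exact_mod_cast this
    push_cast at h3 ⊢
    rw [show (n:ℝ) = 2*(k:ℝ) by exact_mod_cast (by omega : n = 2*k)]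
    linarith
  have final : 4 * Real.sqrt 2 * (2:ℝ)^n ≤ 8 * Real.sqrt n * (Nat.choose n (n/2) : ℝ) := by
    rw [hchoose]
    calc 4 * Real.sqrt 2 * (2:ℝ)^n
        ≤ 4 * Real.sqrt 2 * (Real.sqrt 2 * Real.sqrt n * (Nat.centralBinom k : ℝ)) := by
          apply mul_le_mul_of_nonneg_left hcb (by positivity)
      _ = 4 * (Real.sqrt 2 * Real.sqrt 2) * Real.sqrt n * (Nat.centralBinom k : ℝ) := by ring
      _ = 8 * Real.sqrt n * (Nat.centralBinom k : ℝ) := by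
          rw [Real.mul_self_sqrt (by norm_num : (0:ℝ) ≤ 2)]; ring
  calc (∑ i : Fin n,
        ((Nat.choose (i : ℕ) ((A.filter (fun x => x < i)).card) *
          Nat.choose (n - 1 - (i : ℕ)) ((A.filter (fun x => i < x)).card) : ℕ) : ℝ))
      ≤ ∑ j ∈ Finset.range n, g j := by rw [← step2]; exact step1
    _ ≤ 2^n * (Real.sqrt 2 / Real.sqrt n) * (4 * Real.sqrt n) := step5
    _ = 4 * Real.sqrt 2 * 2^n := step6
    _ ≤ 8 * Real.sqrt n * (Nat.choose n (n/2) : ℝ) := final
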